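/- Let K be a field of characteristic different from 2 and let (A,d_A) and (B,d_B) be graded commutative dg-division rings over K, with a dg-extension φ:(B,d_B)→(A,d_A). If (B,d_B) is acyclic, then (A,d_A) is acyclic, and the dg-extension φ is dg-separable if and only if the induced graded-extension ker(d_B)→ker(d_A) is graded-separable. -/

import Mathlib

open scoped TensorProduct

section DGCore

variable {A : Type} [Ring A] {B : Type} [Ring B]

/-- `(A, d)` together with the grading `𝒜` is a differential graded ring:
`d` is a square-zero additive endomorphism of degree `1` satisfying the graded
Leibniz rule. -/
structure IsDGRing (𝒜 : ℤ → AddSubgroup A) (d : A →+ A) : Prop where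
  d_sq : ∀ x, d (d x) = 0
  d_mem : ∀ (i : ℤ), ∀ x ∈ 𝒜 i, d x ∈ 𝒜 (i + 1)
  leibniz : ∀ (i : ℤ) (a b : A), a ∈ 𝒜 i →
    d (a * b) = d a * b + ((Int.negOnePow i : ℤ)) • (a * d b)

/-- A homomorphism of differential graded rings (a dg-extension). -/
structure IsDGHom (𝒜 : ℤ → AddSubgroup A) (dA : A →+ A)
    (𝒝 : ℤ → AddSubgroup B) (dB : B →+ B) (φ : A →+* B) : Prop where
  map_mem : ∀ (i : ℤ), ∀ x ∈ 𝒜 i, φ x ∈ 𝒝 i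
  map_d : ∀ x, φ (dA x) = dB (φ x)

/-- Graded commutativity: `a * b = (-1)^{|a||b|} b * a` for homogeneous elements. -/
def IsGradedComm (𝒜 : ℤ → AddSubgroup A) : Prop :=
  ∀ (i j : ℤ) (a b : A), a ∈ 𝒜 i → b ∈ 𝒜 j →
    a * b = ((Int.negOnePow (i * j) : ℤ)) • (b * a)

/-- A dg-ring is acyclic if its homology vanishes, i.e. every cycle is a boundary. -/
def IsAcyclic (d : A →+ A) : Prop := ∀ x, d x = 0 → ∃ y, d y = x

/-- A dg left ideal: a graded additive subgroup closed under the differential and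
under left multiplication. -/
def IsDGLeftIdeal (𝒜 : ℤ → AddSubgroup A) [GradedRing 𝒜] (d : A →+ A)
    (I : AddSubgroup A) : Prop :=
  (∀ (a : A), ∀ x ∈ I, a * x ∈ I) ∧ (∀ x ∈ I, d x ∈ I) ∧
    (∀ x ∈ I, ∀ i : ℤ, (DirectSum.decompose 𝒜 x i : A) ∈ I)

/-- A dg right ideal. -/
def IsDGRightIdeal (𝒜 : ℤ → AddSubgroup A) [GradedRing 𝒜] (d : A →+ A)
    (I : AddSubgroup A) : Prop :=
  (∀ (a : A), ∀ x ∈ I, x * a ∈ I) ∧ (∀ x ∈ I, d x ∈ I) ∧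
    (∀ x ∈ I, ∀ i : ℤ, (DirectSum.decompose 𝒜 x i : A) ∈ I)

/-- A dg-division ring: the only dg left ideals and the only dg right ideals
are `0` and the whole ring. -/
def IsDGDivisionRing (𝒜 : ℤ → AddSubgroup A) [GradedRing 𝒜] (d : A →+ A) : Prop :=
  (0 : A) ≠ 1 ∧ (∀ I, IsDGLeftIdeal 𝒜 d I → I = ⊥ ∨ I = ⊤) ∧
    (∀ I, IsDGRightIdeal 𝒜 d I → I = ⊥ ∨ I = ⊤)

/-- A graded division ring (gr-field): every nonzero homogeneous element is invertible. -/
def IsGradedDivisionRing (𝒜 : ℤ → AddSubgroup A) : Prop :=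
  (0 : A) ≠ 1 ∧ ∀ (i : ℤ) (x : A), x ∈ 𝒜 i → x ≠ 0 → IsUnit x

/-- The relations defining `B ⊗[A] B` inside `B ⊗[ℤ] B`, for an extension `φ : A →+* B`. -/
def sepRel (φ : A →+* B) : Submodule ℤ (B ⊗[ℤ] B) :=
  Submodule.span ℤ {x | ∃ (b b' : B) (a : A),
    x = (b * φ a) ⊗ₜ[ℤ] b' - b ⊗ₜ[ℤ] (φ a * b')}

/-- The balanced tensor product `B ⊗[A] B` for an extension `φ : A →+* B`. -/
abbrev SepTensor (φ : A →+* B) := (B ⊗[ℤ] B) ⧸ sepRel φ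

/-- The canonical projection `B ⊗[ℤ] B → B ⊗[A] B`. -/
noncomputable def sepMk (φ : A →+* B) : B ⊗[ℤ] B →ₗ[ℤ] SepTensor φ := (sepRel φ).mkQ

/-- The multiplication map `μ : B ⊗[A] B → B`. -/
noncomputable def sepMul (φ : A →+* B) : SepTensor φ →ₗ[ℤ] B :=
  Submodule.liftQ _ (TensorProduct.lift (LinearMap.mul ℤ B)) (by
    rw [sepRel, Submodule.span_le]
    rintro x ⟨b, b', a, rfl⟩
    change (TensorProduct.lift (LinearMap.mul ℤ B)) ((b * φ a) ⊗ₜ[ℤ] b' - b ⊗ₜ[ℤ] (φ a * b')) = 0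
    erw [map_sub, TensorProduct.lift.tmul, TensorProduct.lift.tmul]
    simp [mul_assoc])

/-- Left multiplication by `b` on `B ⊗[A] B`. -/
noncomputable def sepLMul (φ : A →+* B) (b : B) : SepTensor φ →ₗ[ℤ] SepTensor φ :=
  Submodule.mapQ _ _ (TensorProduct.map (LinearMap.mulLeft ℤ b) LinearMap.id) (by
    rw [sepRel, Submodule.span_le]
    rintro x ⟨b₀, b', a, rfl⟩
    simp only [SetLike.mem_coe, Submodule.mem_comap, map_sub, TensorProduct.map_tmul,
      LinearMap.mulLeft_apply, LinearMap.id_apply]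
    exact Submodule.subset_span ⟨b * b₀, b', a, by
      erw [map_sub, TensorProduct.map_tmul, TensorProduct.map_tmul]
      simp [mul_assoc]⟩)

/-- Right multiplication by `b` on `B ⊗[A] B`. -/
noncomputable def sepRMul (φ : A →+* B) (b : B) : SepTensor φ →ₗ[ℤ] SepTensor φ :=
  Submodule.mapQ _ _ (TensorProduct.map LinearMap.id (LinearMap.mulRight ℤ b)) (by
    rw [sepRel, Submodule.span_le]
    rintro x ⟨b₀, b', a, rfl⟩
    simp only [SetLike.mem_coe, Submodule.mem_comap, map_sub, TensorProduct.map_tmul,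
      LinearMap.mulRight_apply, LinearMap.id_apply]
    exact Submodule.subset_span ⟨b₀, b' * b, a, by
      erw [map_sub, TensorProduct.map_tmul, TensorProduct.map_tmul]
      simp [mul_assoc]⟩)

/-- The grading on `B ⊗[A] B`: the degree `n` part is generated by the classes of
`b ⊗ b'` with `b, b'` homogeneous of degrees summing to `n`. -/
noncomputable def sepGrading (φ : A →+* B) (𝒝 : ℤ → AddSubgroup B) (n : ℤ) :
    AddSubgroup (SepTensor φ) :=
  AddSubgroup.closure {x | ∃ (i j : ℤ) (b b' : B), b ∈ 𝒝 i ∧ b' ∈ 𝒝 j ∧ i + j = n ∧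
    x = sepMk φ (b ⊗ₜ[ℤ] b')}

/-- The sign involution `b ↦ (-1)^{|b|} b` of a graded ring. -/
noncomputable def signMap (𝒝 : ℤ → AddSubgroup B) [GradedRing 𝒝] : B →+ B :=
  (DirectSum.toAddMonoid fun i =>
      (smulAddHom ℤ B ((Int.negOnePow i : ℤ))).comp (𝒝 i).subtype).comp
    (DirectSum.decomposeAddEquiv 𝒝).toAddMonoidHom

lemma signMap_of_mem (𝒝 : ℤ → AddSubgroup B) [GradedRing 𝒝] {i : ℤ} {x : B}
    (hx : x ∈ 𝒝 i) : signMap 𝒝 x = ((Int.negOnePow i : ℤ)) • x := by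
  classical
  unfold signMap
  simp only [AddMonoidHom.comp_apply, AddEquiv.coe_toAddMonoidHom,
    DirectSum.decomposeAddEquiv_apply, DirectSum.decompose_of_mem 𝒝 hx,
    DirectSum.toAddMonoid_of]
  rfl

/-- The differential `d ⊗ 1 + ε ⊗ d` on `B ⊗[ℤ] B` (with Koszul sign). -/
noncomputable def sepDiffPre (𝒝 : ℤ → AddSubgroup B) [GradedRing 𝒝] (dB : B →+ B) :
    B ⊗[ℤ] B →ₗ[ℤ] B ⊗[ℤ] B :=
  TensorProduct.map dB.toIntLinearMap LinearMap.id +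
    TensorProduct.map (signMap 𝒝).toIntLinearMap dB.toIntLinearMap

/-- `D` is the differential induced on `B ⊗[A] B` by `d_B ⊗ 1 + ε ⊗ d_B`. -/
def IsSepDiff (φ : A →+* B) (𝒝 : ℤ → AddSubgroup B) [GradedRing 𝒝] (dB : B →+ B)
    (D : SepTensor φ →+ SepTensor φ) : Prop :=
  ∀ x : B ⊗[ℤ] B, D (sepMk φ x) = sepMk φ (sepDiffPre 𝒝 dB x)

/-- `ρ : B → B ⊗[A] B` is a `B`-`B`-bimodule section of the multiplication map. -/
def IsSepSection (φ : A →+* B) (ρ : B →+ SepTensor φ) : Prop :=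
  (∀ b, sepMul φ (ρ b) = b) ∧
    (∀ (b₁ c b₂ : B), ρ (b₁ * c * b₂) = sepLMul φ b₁ (sepRMul φ b₂ (ρ c)))

/-- The extension `φ : A →+* B` is separable: the multiplication map
`B ⊗[A] B → B` splits as a bimodule map. -/
def IsSeparableExt (φ : A →+* B) : Prop := ∃ ρ : B →+ SepTensor φ, IsSepSection φ ρ

/-- The extension `φ : A →+* B` of graded rings is graded-separable: the multiplication
map `B ⊗[A] B → B` splits as a map of graded bimodules. -/
def IsGrSeparable (φ : A →+* B) (𝒝 : ℤ → AddSubgroup B) : Prop :=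
  ∃ ρ : B →+ SepTensor φ, IsSepSection φ ρ ∧
    ∀ (n : ℤ), ∀ b ∈ 𝒝 n, ρ b ∈ sepGrading φ 𝒝 n

/-- The dg-extension `φ : (A,d_A) →  (B,d_B)` is dg-separable: the multiplication map
`B ⊗[A] B → B` splits as a map of differential graded bimodules. -/
def IsDGSeparable (φ : A →+* B) (𝒝 : ℤ → AddSubgroup B) [GradedRing 𝒝]
    (dB : B →+ B) : Prop :=
  ∃ D : SepTensor φ →+ SepTensor φ, IsSepDiff φ 𝒝 dB D ∧
    ∃ ρ : B →+ SepTensor φ, IsSepSection φ ρ ∧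
      (∀ (n : ℤ), ∀ b ∈ 𝒝 n, ρ b ∈ sepGrading φ 𝒝 n) ∧
      (∀ b, D (ρ b) = ρ (dB b))

end DGCore

section Cycles

variable {A : Type} [Ring A] {B : Type} [Ring B]

lemma IsDGRing.leibniz_total {𝒜 : ℤ → AddSubgroup A} [GradedRing 𝒜] {d : A →+ A}
    (h : IsDGRing 𝒜 d) (a b : A) :
    d (a * b) = d a * b + signMap 𝒜 a * d b := by
  induction a using DirectSum.Decomposition.inductionOn 𝒜 with
  | zero => simp
  | @homogeneous i x =>
      obtain ⟨x, hx⟩ := x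
      rw [h.leibniz i x b hx, signMap_of_mem 𝒜 hx, smul_mul_assoc]
  | add a a' ha ha' =>
      rw [add_mul, map_add, ha, ha', map_add, map_add, add_mul, add_mul]
      abel

/-- The subring of cycles `ker d` of a dg-ring `(A, d)`. -/
def cyclesSubring (𝒜 : ℤ → AddSubgroup A) [GradedRing 𝒜] (d : A →+ A)
    (h : IsDGRing 𝒜 d) : Subring A where
  carrier := {x | d x = 0}
  zero_mem' := map_zero d
  add_mem' := by
    intro x y hx hy
    simp only [Set.mem_setOf_eq] at *
    rw [map_add, hx, hy, add_zero]
  neg_mem' := by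
    intro x hx
    simp only [Set.mem_setOf_eq] at *
    rw [map_neg, hx, neg_zero]
  one_mem' := by
    have h2 : d ((1 : A) * 1) = d 1 * 1 + ((Int.negOnePow 0 : ℤ)) • ((1 : A) * d 1) :=
      h.leibniz 0 1 1 (SetLike.one_mem_graded 𝒜)
    simp only [one_mul, mul_one, Int.negOnePow_zero, Units.val_one, one_smul] at h2
    have h3 : d (1 : A) + 0 = d 1 + d 1 := by rw [add_zero]; exact h2
    exact (add_left_cancel h3).symm
  mul_mem' := by
    intro x y hx hy
    simp only [Set.mem_setOf_eq] at *
    rw [h.leibniz_total x y, hx, hy, zero_mul, mul_zero, add_zero]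

/-- The grading on the subring of cycles, inherited from the ambient graded ring. -/
def cyclesGrading (𝒜 : ℤ → AddSubgroup A) [GradedRing 𝒜] (d : A →+ A)
    (h : IsDGRing 𝒜 d) : ℤ → AddSubgroup (cyclesSubring 𝒜 d h) :=
  fun i => (𝒜 i).comap (cyclesSubring 𝒜 d h).subtype.toAddMonoidHom

end Cycles

section AuxDG

variable {A : Type} [Ring A] {𝒜 : ℤ → AddSubgroup A} [GradedRing 𝒜] {d : A →+ A}

lemma my_d_one (h : IsDGRing 𝒜 d) : d (1 : A) = 0 :=
  (cyclesSubring 𝒜 d h).one_mem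

lemma my_signMap_mul (x y : A) :
    signMap 𝒜 (x * y) = signMap 𝒜 x * signMap 𝒜 y := by
  induction x using DirectSum.Decomposition.inductionOn 𝒜 with
  | zero => simp
  | @homogeneous i m =>
      obtain ⟨m, hm⟩ := m
      induction y using DirectSum.Decomposition.inductionOn 𝒜 with
      | zero => simp
      | @homogeneous j n =>
          obtain ⟨n, hn⟩ := n
          rw [signMap_of_mem 𝒜 hm, signMap_of_mem 𝒜 hn,
            signMap_of_mem 𝒜 (SetLike.mul_mem_graded hm hn),
            Int.negOnePow_add, Units.val_mul, smul_mul_smul_comm]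
      | add y y' hy hy' =>
          rw [mul_add, map_add, hy, hy', map_add, mul_add]
  | add x x' hx hx' =>
      rw [add_mul, map_add, hx, hx', map_add, add_mul]

lemma my_d_signMap (h : IsDGRing 𝒜 d) (x : A) :
    d (signMap 𝒜 x) = - signMap 𝒜 (d x) := by
  induction x using DirectSum.Decomposition.inductionOn 𝒜 with
  | zero => simp
  | @homogeneous i m =>
      obtain ⟨m, hm⟩ := m
      rw [signMap_of_mem 𝒜 hm, signMap_of_mem 𝒜 (h.d_mem i m hm), map_zsmul,
        Int.negOnePow_add, Int.negOnePow_one, Units.val_mul, Units.val_neg, Units.val_one]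
      simp
  | add x x' hx hx' =>
      rw [map_add, map_add, hx, hx', map_add, map_add, neg_add]

lemma my_cycle_signMap (h : IsDGRing 𝒜 d) {x : A} (hx : d x = 0) :
    d (signMap 𝒜 x) = 0 := by rw [my_d_signMap h, hx, map_zero, neg_zero]

lemma my_d_decompose (h : IsDGRing 𝒜 d) (x : A) (i : ℤ) :
    d (DirectSum.decompose 𝒜 x i : A) = (DirectSum.decompose 𝒜 (d x) (i + 1) : A) := by
  induction x using DirectSum.Decomposition.inductionOn 𝒜 with
  | zero => simp
  | @homogeneous j m =>
      obtain ⟨m, hm⟩ := m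
      by_cases hij : j = i
      · subst hij
        rw [DirectSum.decompose_of_mem_same 𝒜 hm,
          DirectSum.decompose_of_mem_same 𝒜 (h.d_mem j m hm)]
      · rw [DirectSum.decompose_of_mem_ne 𝒜 hm hij,
          DirectSum.decompose_of_mem_ne 𝒜 (h.d_mem j m hm) (by omega), map_zero]
  | add x x' hx hx' =>
      rw [DirectSum.decompose_add, map_add, DirectSum.add_apply, AddSubgroup.coe_add,
        map_add, hx, hx', DirectSum.decompose_add, DirectSum.add_apply, AddSubgroup.coe_add]

lemma my_cycle_decompose (h : IsDGRing 𝒜 d) {x : A} (hx : d x = 0) (i : ℤ) :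
    d (DirectSum.decompose 𝒜 x i : A) = 0 := by
  rw [my_d_decompose h, hx]; simp

lemma my_mul_z (hcomm : IsGradedComm 𝒜) {z : A} (hz : z ∈ 𝒜 (-1)) (u : A) :
    u * z = z * signMap 𝒜 u := by
  induction u using DirectSum.Decomposition.inductionOn 𝒜 with
  | zero => simp
  | @homogeneous i m =>
      obtain ⟨m, hm⟩ := m
      rw [hcomm i (-1) m z hm hz, signMap_of_mem 𝒜 hm, mul_smul_comm]
      congr 1
      rw [show i * (-1) = -i by ring, Int.negOnePow_neg]
  | add x x' hx hx' => rw [add_mul, map_add, hx, hx', mul_add]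

lemma my_zsq {K : Type} [Field K] [Algebra K A] (hK : (2:K) ≠ 0)
    (hcomm : IsGradedComm 𝒜) {z : A} (hz : z ∈ 𝒜 (-1)) : z * z = 0 := by
  have h1 : z * z = -(z * z) := by
    have := hcomm (-1) (-1) z z hz hz
    rwa [show (-1 : ℤ) * (-1) = 1 by ring, Int.negOnePow_one, Units.val_neg,
      Units.val_one, neg_smul, one_smul] at this
  have h2 : (2:K) • (z * z) = 0 := by
    rw [two_smul]
    nth_rewrite 1 [h1]
    rw [neg_add_cancel]
  calc z * z = (2:K)⁻¹ • ((2:K) • (z*z)) := (inv_smul_smul₀ hK _).symm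
  _ = 0 := by rw [h2, smul_zero]

lemma my_d_z_mul (h : IsDGRing 𝒜 d) {z : A} (hz : z ∈ 𝒜 (-1)) (hz1 : d z = 1)
    (u : A) : d (z * u) = u - z * d u := by
  rw [h.leibniz_total, hz1, one_mul, signMap_of_mem 𝒜 hz, smul_mul_assoc]
  simp only [Int.negOnePow_neg, Int.negOnePow_one, Units.val_neg, Units.val_one,
    neg_smul, one_smul]
  abel

end AuxDG
section AuxSep
set_option linter.unusedSectionVars false

variable {R S : Type} [Ring R] [Ring S] (f : R →+* S)

lemma sep_induction {P : SepTensor f → Prop} (zero : P 0)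
    (add : ∀ x y, P x → P y → P (x + y))
    (tmul : ∀ b b' : S, P (sepMk f (b ⊗ₜ[ℤ] b'))) : ∀ ξ, P ξ := by
  intro ξ
  obtain ⟨x, rfl⟩ := Submodule.mkQ_surjective (sepRel f) ξ
  induction x using TensorProduct.induction_on with
  | zero => simpa using zero
  | tmul b b' => exact tmul b b'
  | add x y hx hy => rw [map_add]; exact add _ _ hx hy

lemma sepMk_mkQ (x : S ⊗[ℤ] S) : sepMk f x = (sepRel f).mkQ x := rfl

lemma sepMul_mk (x y : S) : sepMul f (sepMk f (x ⊗ₜ[ℤ] y)) = x * y := by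
  rfl

lemma sepLMul_mk (b x y : S) :
    sepLMul f b (sepMk f (x ⊗ₜ[ℤ] y)) = sepMk f ((b * x) ⊗ₜ[ℤ] y) := by
  rfl

lemma sepRMul_mk (b x y : S) :
    sepRMul f b (sepMk f (x ⊗ₜ[ℤ] y)) = sepMk f (x ⊗ₜ[ℤ] (y * b)) := by
  rfl

lemma sepMk_rel (b b' : S) (a : R) :
    sepMk f ((b * f a) ⊗ₜ[ℤ] b') = sepMk f (b ⊗ₜ[ℤ] (f a * b')) := by
  rw [sepMk_mkQ, sepMk_mkQ, Submodule.mkQ_apply, Submodule.mkQ_apply,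
    Submodule.Quotient.eq]
  exact Submodule.subset_span ⟨b, b', a, rfl⟩

lemma sepLMul_one (ξ : SepTensor f) : sepLMul f 1 ξ = ξ := by
  induction ξ using sep_induction with
  | zero => simp
  | add x y hx hy => rw [map_add, hx, hy]
  | tmul b b' => rw [sepLMul_mk, one_mul]

lemma sepRMul_one (ξ : SepTensor f) : sepRMul f 1 ξ = ξ := by
  induction ξ using sep_induction with
  | zero => simp
  | add x y hx hy => rw [map_add, hx, hy]
  | tmul b b' => rw [sepRMul_mk, mul_one]

lemma sepLMul_lmul (b b' : S) (ξ : SepTensor f) :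
    sepLMul f (b * b') ξ = sepLMul f b (sepLMul f b' ξ) := by
  induction ξ using sep_induction with
  | zero => simp
  | add x y hx hy => rw [map_add, map_add, hx, hy, map_add]
  | tmul x y => rw [sepLMul_mk, sepLMul_mk, sepLMul_mk, mul_assoc]

lemma sepRMul_rmul (b b' : S) (ξ : SepTensor f) :
    sepRMul f b (sepRMul f b' ξ) = sepRMul f (b' * b) ξ := by
  induction ξ using sep_induction with
  | zero => simp
  | add x y hx hy => rw [map_add, map_add, hx, hy, map_add]
  | tmul x y => rw [sepRMul_mk, sepRMul_mk, sepRMul_mk, mul_assoc]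

lemma sepLMul_add' (b b' : S) (ξ : SepTensor f) :
    sepLMul f (b + b') ξ = sepLMul f b ξ + sepLMul f b' ξ := by
  induction ξ using sep_induction with
  | zero => simp
  | add x y hx hy =>
      rw [map_add, map_add, map_add, hx, hy]; abel
  | tmul x y => rw [sepLMul_mk, sepLMul_mk, sepLMul_mk, add_mul,
      TensorProduct.add_tmul, map_add]

lemma sepRMul_add' (b b' : S) (ξ : SepTensor f) :
    sepRMul f (b + b') ξ = sepRMul f b ξ + sepRMul f b' ξ := by
  induction ξ using sep_induction with
  | zero => simp
  | add x y hx hy =>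
      rw [map_add, map_add, map_add, hx, hy]; abel
  | tmul x y => rw [sepRMul_mk, sepRMul_mk, sepRMul_mk, mul_add,
      TensorProduct.tmul_add, map_add]

lemma sepLMul_zero' (ξ : SepTensor f) : sepLMul f 0 ξ = 0 := by
  induction ξ using sep_induction with
  | zero => simp
  | add x y hx hy => rw [map_add, hx, hy, add_zero]
  | tmul x y => rw [sepLMul_mk, zero_mul, TensorProduct.zero_tmul, map_zero]

lemma sepLMul_rmul_comm (b b' : S) (ξ : SepTensor f) :
    sepLMul f b (sepRMul f b' ξ) = sepRMul f b' (sepLMul f b ξ) := by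
  induction ξ using sep_induction with
  | zero => simp
  | add x y hx hy => rw [map_add, map_add, hx, hy, map_add, map_add]
  | tmul x y => rw [sepRMul_mk, sepLMul_mk, sepLMul_mk, sepRMul_mk]

lemma sepMul_lmul (b : S) (ξ : SepTensor f) :
    sepMul f (sepLMul f b ξ) = b * sepMul f ξ := by
  induction ξ using sep_induction with
  | zero => simp
  | add x y hx hy => rw [map_add, map_add, hx, hy, map_add, mul_add]
  | tmul x y => rw [sepLMul_mk, sepMul_mk, sepMul_mk, mul_assoc]

lemma sepMul_rmul (b : S) (ξ : SepTensor f) :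
    sepMul f (sepRMul f b ξ) = sepMul f ξ * b := by
  induction ξ using sep_induction with
  | zero => simp
  | add x y hx hy => rw [map_add, map_add, hx, hy, map_add, add_mul]
  | tmul x y => rw [sepRMul_mk, sepMul_mk, sepMul_mk, mul_assoc]

lemma sepGrading_tmul (𝒮 : ℤ → AddSubgroup S) {i j n : ℤ} {b b' : S}
    (hb : b ∈ 𝒮 i) (hb' : b' ∈ 𝒮 j) (hij : i + j = n) :
    sepMk f (b ⊗ₜ[ℤ] b') ∈ sepGrading f 𝒮 n :=
  AddSubgroup.subset_closure ⟨i, j, b, b', hb, hb', hij, rfl⟩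

lemma sepLMul_grading (𝒮 : ℤ → AddSubgroup S) [GradedRing 𝒮] {k : ℤ} {z : S} (hz : z ∈ 𝒮 k)
    {n : ℤ} {ξ : SepTensor f} (hξ : ξ ∈ sepGrading f 𝒮 n) :
    sepLMul f z ξ ∈ sepGrading f 𝒮 (k + n) := by
  induction hξ using AddSubgroup.closure_induction with
  | mem x hx =>
      obtain ⟨i, j, b, b', hb, hb', hij, rfl⟩ := hx
      rw [sepLMul_mk]
      exact sepGrading_tmul f 𝒮 (SetLike.mul_mem_graded hz hb) hb' (by omega)
  | zero => rw [map_zero]; exact zero_mem _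
  | add x y hx hy px py => rw [map_add]; exact add_mem px py
  | neg x hx px => rw [map_neg]; exact neg_mem px

end AuxSep
section AuxCyc
set_option linter.unusedSectionVars false

variable {R : Type} [Ring R] (ℛ : ℤ → AddSubgroup R) [GradedRing ℛ] (d : R →+ R)
  (h : IsDGRing ℛ d) (z : R) (hz : z ∈ ℛ (-1)) (hz1 : d z = 1) (hzz : z * z = 0)

lemma mem_cycles_iff {x : R} : x ∈ cyclesSubring ℛ d h ↔ d x = 0 := Iff.rfl

/-- The differential, viewed as a map into the cycles. -/
def dCyc : R →+ cyclesSubring ℛ d h :=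
  AddMonoidHom.mk' (fun a => ⟨d a, h.d_sq a⟩)
    (fun a b => Subtype.ext (map_add d a b))

@[simp] lemma dCyc_coe (a : R) : (dCyc ℛ d h a : R) = d a := rfl

/-- The projection `a ↦ a - z * d a` onto the cycles. -/
noncomputable def cycP : R →+ cyclesSubring ℛ d h :=
  AddMonoidHom.mk' (fun a => ⟨a - z * d a,
    (mem_cycles_iff ℛ d h).mpr (by
      rw [map_sub, my_d_z_mul h hz hz1, h.d_sq, mul_zero, sub_zero, sub_self])⟩)
    (fun a b => Subtype.ext (by
      push_cast
      rw [map_add, mul_add]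
      abel))

lemma cycP_coe (a : R) : (cycP ℛ d h z hz hz1 a : R) = a - z * d a := rfl

lemma cycP_decomp (a : R) : a = (cycP ℛ d h z hz hz1 a : R) + z * d a := by
  rw [cycP_coe, sub_add_cancel]

lemma cycP_of_cycle {a : R} (ha : d a = 0) : cycP ℛ d h z hz hz1 a = ⟨a, ha⟩ :=
  Subtype.ext (by rw [cycP_coe, ha, mul_zero, sub_zero])

lemma cycP_d (a : R) : cycP ℛ d h z hz hz1 (d a) = dCyc ℛ d h a :=
  Subtype.ext (by rw [cycP_coe, h.d_sq, mul_zero, sub_zero, dCyc_coe])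

include hzz in
lemma cycP_z_mul (u : R) : cycP ℛ d h z hz hz1 (z * u) = 0 := by
  refine Subtype.ext ?_
  rw [ZeroMemClass.coe_zero, cycP_coe, my_d_z_mul h hz hz1, mul_sub,
    ← mul_assoc, hzz, zero_mul, sub_zero, sub_self]

lemma cycP_mul_right (a c : R) (hc : d c = 0) :
    (cycP ℛ d h z hz hz1 (a * c) : R) = (cycP ℛ d h z hz hz1 a : R) * c := by
  rw [cycP_coe, cycP_coe, h.leibniz_total, hc, mul_zero, add_zero, sub_mul,
    mul_assoc]

lemma cycP_mul_left (hcomm : IsGradedComm ℛ) (c a : R) (hc : d c = 0) :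
    (cycP ℛ d h z hz hz1 (c * a) : R) = c * (cycP ℛ d h z hz hz1 a : R) := by
  rw [cycP_coe, cycP_coe, h.leibniz_total, hc, zero_mul, zero_add, mul_sub]
  congr 1
  rw [← mul_assoc, ← mul_assoc, my_mul_z hcomm hz c]

include hzz in
lemma cycP_mul (hcomm : IsGradedComm ℛ) (a a' : R) :
    cycP ℛ d h z hz hz1 (a * a') =
      cycP ℛ d h z hz hz1 a * cycP ℛ d h z hz hz1 a' := by
  have expand : a * a' = (cycP ℛ d h z hz hz1 a : R) * a' + z * (d a * a') := by
    nth_rewrite 1 [cycP_decomp ℛ d h z hz hz1 a]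
    rw [add_mul, mul_assoc]
  refine Subtype.ext ?_
  rw [expand, map_add, cycP_z_mul ℛ d h z hz hz1 hzz, add_zero]
  push_cast
  exact cycP_mul_left ℛ d h z hz hz1 hcomm _ _ (cycP ℛ d h z hz hz1 a).2

lemma cycP_sign (a : R) :
    (cycP ℛ d h z hz hz1 (signMap ℛ a) : R) =
      signMap ℛ (cycP ℛ d h z hz hz1 a : R) := by
  rw [cycP_coe, cycP_coe, my_d_signMap h, map_sub, my_signMap_mul,
    signMap_of_mem ℛ hz]
  simp only [Int.negOnePow_neg, Int.negOnePow_one, Units.val_neg, Units.val_one,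
    neg_smul, one_smul, mul_neg, neg_mul, sub_neg_eq_add]

lemma cycP_mem_grading {i : ℤ} {a : R} (ha : a ∈ ℛ i) :
    (cycP ℛ d h z hz hz1 a : R) ∈ ℛ i := by
  rw [cycP_coe]
  refine sub_mem ha ?_
  have := SetLike.mul_mem_graded hz (h.d_mem i a ha)
  rwa [show (-1 : ℤ) + (i + 1) = i by ring] at this

/-- Every additive subgroup of the cycles containing all homogeneous cycles is
everything. -/
lemma cycles_homog_induction (S : AddSubgroup (cyclesSubring ℛ d h))
    (hS : ∀ (i : ℤ) (x : R) (hx : x ∈ ℛ i) (hc : d x = 0), (⟨x, hc⟩ : cyclesSubring ℛ d h) ∈ S)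
    (c : cyclesSubring ℛ d h) : c ∈ S := by
  classical
  obtain ⟨x, hx⟩ := c
  have hsum := DirectSum.sum_support_decompose ℛ x
  have : (⟨x, hx⟩ : cyclesSubring ℛ d h) =
      ∑ i ∈ DFinsupp.support (DirectSum.decompose ℛ x),
        (⟨(DirectSum.decompose ℛ x i : R), my_cycle_decompose h hx i⟩ :
          cyclesSubring ℛ d h) := by
    refine Subtype.ext ?_
    push_cast
    exact hsum.symm
  rw [this]
  exact sum_mem fun i _ =>
    hS i _ (SetLike.coe_mem _) (my_cycle_decompose h hx i)

end AuxCyc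
section SgnCyc
variable {R : Type} [Ring R] (ℛ : ℤ → AddSubgroup R) [GradedRing ℛ] (d : R →+ R)
  (h : IsDGRing ℛ d)

/-- The sign involution restricted to cycles. -/
noncomputable def sgnCyc : cyclesSubring ℛ d h →+ cyclesSubring ℛ d h :=
  AddMonoidHom.mk' (fun c => ⟨signMap ℛ (c : R), my_cycle_signMap h c.2⟩)
    (fun a b => Subtype.ext (by push_cast; rw [map_add]))

lemma sgnCyc_coe (c : cyclesSubring ℛ d h) :
    (sgnCyc ℛ d h c : R) = signMap ℛ (c : R) := rfl

end SgnCyc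

section AuxExt
set_option linter.unusedSectionVars false
set_option maxHeartbeats 1000000

variable {K A B : Type} [Field K] [Ring A] [Ring B] [Algebra K A] [Algebra K B]
  (𝒜 : ℤ → AddSubgroup A) [GradedRing 𝒜] (𝒝 : ℤ → AddSubgroup B) [GradedRing 𝒝]
  (dA : A →+ A) (dB : B →+ B)
  (hA : IsDGRing 𝒜 dA) (hB : IsDGRing 𝒝 dB)
  (hAcomm : IsGradedComm 𝒜)
  (φ : B →ₐ[K] A) (hφ : IsDGHom 𝒝 dB 𝒜 dA φ.toRingHom)
  (ψ : cyclesSubring 𝒝 dB hB →+* cyclesSubring 𝒜 dA hA)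
  (hψ : ∀ x : cyclesSubring 𝒝 dB hB, (ψ x : A) = φ (x : B))
  (w : B) (hw : w ∈ 𝒝 (-1)) (hw1 : dB w = 1)
  (hzmem : φ w ∈ 𝒜 (-1)) (hz1 : dA (φ w) = 1) (hzz : φ w * φ w = 0)

lemma mem_cyclesGrading_iff {c : cyclesSubring 𝒜 dA hA} {i : ℤ} :
    c ∈ cyclesGrading 𝒜 dA hA i ↔ (c : A) ∈ 𝒜 i := Iff.rfl

include hφ in
lemma sign_phi (b : B) : signMap 𝒜 (φ b) = φ (signMap 𝒝 b) := by
  induction b using DirectSum.Decomposition.inductionOn 𝒝 with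
  | zero => simp
  | @homogeneous i m =>
      obtain ⟨m, hm⟩ := m
      have h1 : (φ m : A) ∈ 𝒜 i := hφ.map_mem i m hm
      rw [signMap_of_mem 𝒝 hm, map_zsmul, signMap_of_mem 𝒜 h1]
  | add x y hx hy => rw [map_add, map_add, hx, hy, map_add, map_add]

/-- The inclusion `Z ⊗[W] Z → A ⊗[B] A`. -/
noncomputable def iotaT : SepTensor ψ →ₗ[ℤ] SepTensor φ.toRingHom :=
  Submodule.liftQ _ ((sepMk φ.toRingHom).comp
    (TensorProduct.map
      (cyclesSubring 𝒜 dA hA).subtype.toAddMonoidHom.toIntLinearMap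
      (cyclesSubring 𝒜 dA hA).subtype.toAddMonoidHom.toIntLinearMap)) (by
    refine Submodule.span_le.mpr ?_
    rintro x ⟨c, c', a, rfl⟩
    rw [SetLike.mem_coe, LinearMap.mem_ker]
    erw [map_sub, LinearMap.comp_apply, LinearMap.comp_apply, TensorProduct.map_tmul,
      TensorProduct.map_tmul]
    simp only [
      TensorProduct.map_tmul, AddMonoidHom.coe_toIntLinearMap,
      RingHom.toAddMonoidHom_eq_coe, AddMonoidHom.coe_coe, Subring.coe_subtype]
    have e1 : ((c * ψ a : cyclesSubring 𝒜 dA hA) : A) =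
        (c : A) * φ.toRingHom (a : B) := by
      push_cast [hψ a]; rfl
    have e2 : ((ψ a * c' : cyclesSubring 𝒜 dA hA) : A) =
        φ.toRingHom (a : B) * (c' : A) := by
      push_cast [hψ a]; rfl
    rw [e1, e2, sepMk_rel, sub_self])

lemma iotaT_tmul (c c' : cyclesSubring 𝒜 dA hA) :
    iotaT 𝒜 𝒝 dA dB hA hB φ ψ hψ (sepMk ψ (c ⊗ₜ[ℤ] c')) =
      sepMk φ.toRingHom ((c : A) ⊗ₜ[ℤ] (c' : A)) := by
  rfl

/-- The sign map on `Z ⊗[W] Z`. -/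
noncomputable def EMap : SepTensor ψ →ₗ[ℤ] SepTensor ψ :=
  Submodule.liftQ _ ((sepMk ψ).comp
    (TensorProduct.map (sgnCyc 𝒜 dA hA).toIntLinearMap
      (sgnCyc 𝒜 dA hA).toIntLinearMap)) (by
    refine Submodule.span_le.mpr ?_
    rintro x ⟨c, c', a, rfl⟩
    rw [SetLike.mem_coe, LinearMap.mem_ker]
    erw [map_sub, LinearMap.comp_apply, LinearMap.comp_apply, TensorProduct.map_tmul,
      TensorProduct.map_tmul]
    simp only [
      TensorProduct.map_tmul, AddMonoidHom.coe_toIntLinearMap]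
    have ha' : dB (signMap 𝒝 (a : B)) = 0 := my_cycle_signMap hB a.2
    have e1 : sgnCyc 𝒜 dA hA (c * ψ a) =
        sgnCyc 𝒜 dA hA c * ψ ⟨signMap 𝒝 (a : B), ha'⟩ := by
      refine Subtype.ext ?_
      push_cast [sgnCyc_coe, hψ]
      rw [my_signMap_mul, sign_phi 𝒜 𝒝 dA dB φ hφ]
    have e2 : sgnCyc 𝒜 dA hA (ψ a * c') =
        ψ ⟨signMap 𝒝 (a : B), ha'⟩ * sgnCyc 𝒜 dA hA c' := by
      refine Subtype.ext ?_
      push_cast [sgnCyc_coe, hψ]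
      rw [my_signMap_mul, sign_phi 𝒜 𝒝 dA dB φ hφ]
    rw [e1, e2, sepMk_rel, sub_self])

lemma EMap_tmul (c c' : cyclesSubring 𝒜 dA hA) :
    EMap 𝒜 𝒝 dA dB hA hB φ hφ ψ hψ (sepMk ψ (c ⊗ₜ[ℤ] c')) =
      sepMk ψ (sgnCyc 𝒜 dA hA c ⊗ₜ[ℤ] sgnCyc 𝒜 dA hA c') := by
  rfl

lemma sepDiffPre_tmul (u v : A) :
    sepDiffPre 𝒜 dA (u ⊗ₜ[ℤ] v) = dA u ⊗ₜ[ℤ] v + signMap 𝒜 u ⊗ₜ[ℤ] dA v := by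
  rfl

/-- The differential on `A ⊗[B] A`. -/
noncomputable def DMap : SepTensor φ.toRingHom →ₗ[ℤ] SepTensor φ.toRingHom :=
  Submodule.mapQ _ _ (sepDiffPre 𝒜 dA) (by
    refine Submodule.span_le.mpr ?_
    rintro x ⟨b, b', a, rfl⟩
    simp only [SetLike.mem_coe, Submodule.mem_comap, map_sub]
    rw [sepDiffPre_tmul, sepDiffPre_tmul]
    have e1 : dA (b * φ.toRingHom a) =
        dA b * φ.toRingHom a + signMap 𝒜 b * φ.toRingHom (dB a) := by
      rw [hA.leibniz_total, hφ.map_d]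
    have e2 : signMap 𝒜 (b * φ.toRingHom a) =
        signMap 𝒜 b * φ.toRingHom (signMap 𝒝 a) := by
      rw [my_signMap_mul]
      congr 1
      exact sign_phi 𝒜 𝒝 dA dB φ hφ a
    have e3 : dA (φ.toRingHom a * b') =
        φ.toRingHom (dB a) * b' + φ.toRingHom (signMap 𝒝 a) * dA b' := by
      rw [hA.leibniz_total, hφ.map_d]
      congr 2
      exact sign_phi 𝒜 𝒝 dA dB φ hφ a
    rw [e1, e2, e3]
    have heq : (dA b * φ.toRingHom a + signMap 𝒜 b * φ.toRingHom (dB a)) ⊗ₜ[ℤ] b' +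
          (signMap 𝒜 b * φ.toRingHom (signMap 𝒝 a)) ⊗ₜ[ℤ] dA b' -
          (dA b ⊗ₜ[ℤ] (φ.toRingHom a * b') +
            signMap 𝒜 b ⊗ₜ[ℤ] (φ.toRingHom (dB a) * b' + φ.toRingHom (signMap 𝒝 a) * dA b')) =
        ((dA b * φ.toRingHom a) ⊗ₜ[ℤ] b' - dA b ⊗ₜ[ℤ] (φ.toRingHom a * b')) +
        ((signMap 𝒜 b * φ.toRingHom (dB a)) ⊗ₜ[ℤ] b' -
          signMap 𝒜 b ⊗ₜ[ℤ] (φ.toRingHom (dB a) * b')) +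
        ((signMap 𝒜 b * φ.toRingHom (signMap 𝒝 a)) ⊗ₜ[ℤ] dA b' -
          signMap 𝒜 b ⊗ₜ[ℤ] (φ.toRingHom (signMap 𝒝 a) * dA b')) := by
      rw [TensorProduct.add_tmul, TensorProduct.tmul_add]
      abel
    rw [heq]
    refine add_mem (add_mem ?_ ?_) ?_ <;>
      exact Submodule.subset_span ⟨_, _, _, rfl⟩)

lemma DMap_mk (x : A ⊗[ℤ] A) :
    DMap 𝒜 𝒝 dA dB hA φ hφ (sepMk φ.toRingHom x) =
      sepMk φ.toRingHom (sepDiffPre 𝒜 dA x) := by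
  rfl

/-- The projection `A ⊗[B] A → Z ⊗[W] Z`. -/
noncomputable def piMap : SepTensor φ.toRingHom →ₗ[ℤ] SepTensor ψ :=
  Submodule.liftQ _ ((sepMk ψ).comp
    (TensorProduct.map (cycP 𝒜 dA hA (φ w) hzmem hz1).toIntLinearMap
      (cycP 𝒜 dA hA (φ w) hzmem hz1).toIntLinearMap)) (by
    refine Submodule.span_le.mpr ?_
    rintro x ⟨b, b', a, rfl⟩
    rw [SetLike.mem_coe, LinearMap.mem_ker]
    erw [map_sub, LinearMap.comp_apply, LinearMap.comp_apply, TensorProduct.map_tmul,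
      TensorProduct.map_tmul]
    simp only [
      TensorProduct.map_tmul, AddMonoidHom.coe_toIntLinearMap]
    have hwB : (w : B) ∈ 𝒝 (-1) := hw
    have hPBa : dB ((cycP 𝒝 dB hB w hw hw1 a : B)) = 0 := (cycP 𝒝 dB hB w hw hw1 a).2
    have hphiPB : dA (φ ((cycP 𝒝 dB hB w hw hw1 a : B))) = 0 := by
      have := hφ.map_d ((cycP 𝒝 dB hB w hw hw1 a : B))
      rw [hPBa, map_zero] at this
      exact this.symm
    have hdec : φ.toRingHom a =
        φ ((cycP 𝒝 dB hB w hw hw1 a : B)) + φ w * φ (dB a) := by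
      have := cycP_decomp 𝒝 dB hB w hw hw1 a
      calc φ.toRingHom a = φ a := rfl
      _ = φ ((cycP 𝒝 dB hB w hw hw1 a : B) + w * dB a) := by rw [← this]
      _ = _ := by rw [map_add, map_mul]
    have e1 : cycP 𝒜 dA hA (φ w) hzmem hz1 (b * φ.toRingHom a) =
        cycP 𝒜 dA hA (φ w) hzmem hz1 b * ψ (cycP 𝒝 dB hB w hw hw1 a) := by
      refine Subtype.ext ?_
      rw [hdec, mul_add, map_add]
      have t1 : (cycP 𝒜 dA hA (φ w) hzmem hz1 (b * φ ((cycP 𝒝 dB hB w hw hw1 a : B))) : A) =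
          (cycP 𝒜 dA hA (φ w) hzmem hz1 b : A) * φ ((cycP 𝒝 dB hB w hw hw1 a : B)) :=
        cycP_mul_right 𝒜 dA hA (φ w) hzmem hz1 _ _ hphiPB
      have t2 : b * (φ w * φ (dB a)) = φ w * (signMap 𝒜 b * φ (dB a)) := by
        rw [← mul_assoc, my_mul_z hAcomm hzmem b, mul_assoc]
      have t3 : cycP 𝒜 dA hA (φ w) hzmem hz1 (b * (φ w * φ (dB a))) = 0 := by
        rw [t2]
        exact cycP_z_mul 𝒜 dA hA (φ w) hzmem hz1 hzz _
      push_cast [t3]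
      rw [t1, hψ, add_zero]
    have e2 : cycP 𝒜 dA hA (φ w) hzmem hz1 (φ.toRingHom a * b') =
        ψ (cycP 𝒝 dB hB w hw hw1 a) * cycP 𝒜 dA hA (φ w) hzmem hz1 b' := by
      refine Subtype.ext ?_
      rw [hdec, add_mul, map_add]
      have t1 : (cycP 𝒜 dA hA (φ w) hzmem hz1 (φ ((cycP 𝒝 dB hB w hw hw1 a : B)) * b') : A) =
          φ ((cycP 𝒝 dB hB w hw hw1 a : B)) * (cycP 𝒜 dA hA (φ w) hzmem hz1 b' : A) :=
        cycP_mul_left 𝒜 dA hA (φ w) hzmem hz1 hAcomm _ _ hphiPB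
      have t3 : cycP 𝒜 dA hA (φ w) hzmem hz1 (φ w * φ (dB a) * b') = 0 := by
        rw [mul_assoc]
        exact cycP_z_mul 𝒜 dA hA (φ w) hzmem hz1 hzz _
      push_cast [t3]
      rw [t1, hψ, add_zero]
    rw [e1, e2, sepMk_rel, sub_self])

lemma piMap_tmul (u v : A) :
    piMap 𝒜 𝒝 dA dB hA hB hAcomm φ hφ ψ hψ w hw hw1 hzmem hz1 hzz
        (sepMk φ.toRingHom (u ⊗ₜ[ℤ] v)) =
      sepMk ψ (cycP 𝒜 dA hA (φ w) hzmem hz1 u ⊗ₜ[ℤ] cycP 𝒜 dA hA (φ w) hzmem hz1 v) := by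
  rfl

end AuxExt
section AuxExt2
set_option linter.unusedSectionVars false
set_option maxHeartbeats 1000000

variable {K A B : Type} [Field K] [Ring A] [Ring B] [Algebra K A] [Algebra K B]
  (𝒜 : ℤ → AddSubgroup A) [GradedRing 𝒜] (𝒝 : ℤ → AddSubgroup B) [GradedRing 𝒝]
  (dA : A →+ A) (dB : B →+ B)
  (hA : IsDGRing 𝒜 dA) (hB : IsDGRing 𝒝 dB)
  (hAcomm : IsGradedComm 𝒜)
  (φ : B →ₐ[K] A) (hφ : IsDGHom 𝒝 dB 𝒜 dA φ.toRingHom)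
  (ψ : cyclesSubring 𝒝 dB hB →+* cyclesSubring 𝒜 dA hA)
  (hψ : ∀ x : cyclesSubring 𝒝 dB hB, (ψ x : A) = φ (x : B))
  (w : B) (hw : w ∈ 𝒝 (-1)) (hw1 : dB w = 1)
  (hzmem : φ w ∈ 𝒜 (-1)) (hz1 : dA (φ w) = 1) (hzz : φ w * φ w = 0)

lemma sepMul_iota (ζ : SepTensor ψ) :
    sepMul φ.toRingHom (iotaT 𝒜 𝒝 dA dB hA hB φ ψ hψ ζ) =
      ((sepMul ψ ζ : cyclesSubring 𝒜 dA hA) : A) := by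
  induction ζ using sep_induction with
  | zero => simp [-AlgHom.toRingHom_eq_coe]
  | add x y hx hy =>
      rw [map_add, map_add, hx, hy, map_add]
      push_cast
      ring
  | tmul c c' =>
      rw [iotaT_tmul, sepMul_mk, sepMul_mk]
      push_cast
      ring

lemma iota_lmul (c : cyclesSubring 𝒜 dA hA) (ζ : SepTensor ψ) :
    iotaT 𝒜 𝒝 dA dB hA hB φ ψ hψ (sepLMul ψ c ζ) =
      sepLMul φ.toRingHom (c : A) (iotaT 𝒜 𝒝 dA dB hA hB φ ψ hψ ζ) := by
  induction ζ using sep_induction with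
  | zero => simp [-AlgHom.toRingHom_eq_coe]
  | add x y hx hy =>
      rw [map_add, map_add, hx, hy, ← map_add, ← map_add]
  | tmul x y =>
      rw [sepLMul_mk, iotaT_tmul, iotaT_tmul, sepLMul_mk]
      norm_cast

lemma iota_rmul (c : cyclesSubring 𝒜 dA hA) (ζ : SepTensor ψ) :
    iotaT 𝒜 𝒝 dA dB hA hB φ ψ hψ (sepRMul ψ c ζ) =
      sepRMul φ.toRingHom (c : A) (iotaT 𝒜 𝒝 dA dB hA hB φ ψ hψ ζ) := by
  induction ζ using sep_induction with
  | zero => simp [-AlgHom.toRingHom_eq_coe]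
  | add x y hx hy =>
      rw [map_add, map_add, hx, hy, ← map_add, ← map_add]
  | tmul x y =>
      rw [sepRMul_mk, iotaT_tmul, iotaT_tmul, sepRMul_mk]
      norm_cast

lemma iota_grading {n : ℤ} {ζ : SepTensor ψ}
    (hζ : ζ ∈ sepGrading ψ (cyclesGrading 𝒜 dA hA) n) :
    iotaT 𝒜 𝒝 dA dB hA hB φ ψ hψ ζ ∈ sepGrading φ.toRingHom 𝒜 n := by
  induction hζ using AddSubgroup.closure_induction with
  | mem x hx =>
      obtain ⟨i, j, c, c', hc, hc', hij, rfl⟩ := hx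
      rw [iotaT_tmul]
      exact sepGrading_tmul φ.toRingHom 𝒜 hc hc' hij
  | zero => rw [map_zero]; exact zero_mem _
  | add x y hx hy px py => rw [map_add]; exact add_mem px py
  | neg x hx px => rw [map_neg]; exact neg_mem px

lemma E_grading {n : ℤ} {ζ : SepTensor ψ}
    (hζ : ζ ∈ sepGrading ψ (cyclesGrading 𝒜 dA hA) n) :
    EMap 𝒜 𝒝 dA dB hA hB φ hφ ψ hψ ζ = ((Int.negOnePow n : ℤ)) • ζ := by
  induction hζ using AddSubgroup.closure_induction with
  | mem x hx =>
      obtain ⟨i, j, c, c', hc, hc', hij, rfl⟩ := hx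
      rw [EMap_tmul]
      have hc2 : (c : A) ∈ 𝒜 i := hc
      have hc2' : (c' : A) ∈ 𝒜 j := hc'
      have e1 : sgnCyc 𝒜 dA hA c = ((Int.negOnePow i : ℤ)) • c := by
        refine Subtype.ext ?_
        rw [sgnCyc_coe, signMap_of_mem 𝒜 hc2]
        norm_cast
      have e2 : sgnCyc 𝒜 dA hA c' = ((Int.negOnePow j : ℤ)) • c' := by
        refine Subtype.ext ?_
        rw [sgnCyc_coe, signMap_of_mem 𝒜 hc2']
        norm_cast
      rw [e1, e2]
      have e3 : (((Int.negOnePow i : ℤ)) • c) ⊗ₜ[ℤ] (((Int.negOnePow j : ℤ)) • c') =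
          ((Int.negOnePow n : ℤ)) • (c ⊗ₜ[ℤ] c') := by
        rw [TensorProduct.tmul_smul, ← TensorProduct.smul_tmul', smul_smul,
          ← Units.val_mul, ← Int.negOnePow_add, add_comm j i, hij]
      rw [e3, map_zsmul]
  | zero => rw [map_zero, smul_zero]
  | add x y hx hy px py => rw [map_add, px, py, smul_add]
  | neg x hx px => rw [map_neg, px, smul_neg]

include hAcomm hzmem in
lemma rmulz_iota (ζ : SepTensor ψ) :
    sepRMul φ.toRingHom (φ w) (iotaT 𝒜 𝒝 dA dB hA hB φ ψ hψ ζ) =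
      sepLMul φ.toRingHom (φ w)
        (iotaT 𝒜 𝒝 dA dB hA hB φ ψ hψ (EMap 𝒜 𝒝 dA dB hA hB φ hφ ψ hψ ζ)) := by
  induction ζ using sep_induction with
  | zero => simp [-AlgHom.toRingHom_eq_coe]
  | add x y hx hy => rw [map_add, map_add, hx, hy, map_add, map_add, map_add]
  | tmul c c' =>
      rw [iotaT_tmul, sepRMul_mk, EMap_tmul, iotaT_tmul, sepLMul_mk, sgnCyc_coe,
        sgnCyc_coe]
      have e1 : (c' : A) * φ w = φ w * signMap 𝒜 (c' : A) :=
        my_mul_z hAcomm hzmem _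
      have e2 : (c : A) * φ w = φ w * signMap 𝒜 (c : A) :=
        my_mul_z hAcomm hzmem _
      have e3 : φ w = φ.toRingHom w := rfl
      rw [e1, e3, ← sepMk_rel φ.toRingHom, ← e3, e2]

lemma sepMul_pi (ξ : SepTensor φ.toRingHom) :
    sepMul ψ (piMap 𝒜 𝒝 dA dB hA hB hAcomm φ hφ ψ hψ w hw hw1 hzmem hz1 hzz ξ) =
      cycP 𝒜 dA hA (φ w) hzmem hz1 (sepMul φ.toRingHom ξ) := by
  induction ξ using sep_induction with
  | zero => simp [-AlgHom.toRingHom_eq_coe]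
  | add x y hx hy => rw [map_add, map_add, hx, hy, map_add, map_add]
  | tmul u v =>
      rw [piMap_tmul, sepMul_mk, sepMul_mk,
        cycP_mul 𝒜 dA hA (φ w) hzmem hz1 hzz hAcomm]

lemma pi_lmul (c : cyclesSubring 𝒜 dA hA) (ξ : SepTensor φ.toRingHom) :
    piMap 𝒜 𝒝 dA dB hA hB hAcomm φ hφ ψ hψ w hw hw1 hzmem hz1 hzz
        (sepLMul φ.toRingHom (c : A) ξ) =
      sepLMul ψ c (piMap 𝒜 𝒝 dA dB hA hB hAcomm φ hφ ψ hψ w hw hw1 hzmem hz1 hzz ξ) := by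
  induction ξ using sep_induction with
  | zero => simp [-AlgHom.toRingHom_eq_coe]
  | add x y hx hy => rw [map_add, map_add, hx, hy, map_add, map_add]
  | tmul u v =>
      rw [sepLMul_mk, piMap_tmul, piMap_tmul, sepLMul_mk]
      congr 2
      exact Subtype.ext (cycP_mul_left 𝒜 dA hA (φ w) hzmem hz1 hAcomm _ _ c.2)

lemma pi_rmul (c : cyclesSubring 𝒜 dA hA) (ξ : SepTensor φ.toRingHom) :
    piMap 𝒜 𝒝 dA dB hA hB hAcomm φ hφ ψ hψ w hw hw1 hzmem hz1 hzz
        (sepRMul φ.toRingHom (c : A) ξ) =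
      sepRMul ψ c (piMap 𝒜 𝒝 dA dB hA hB hAcomm φ hφ ψ hψ w hw hw1 hzmem hz1 hzz ξ) := by
  induction ξ using sep_induction with
  | zero => simp [-AlgHom.toRingHom_eq_coe]
  | add x y hx hy => rw [map_add, map_add, hx, hy, map_add, map_add]
  | tmul u v =>
      rw [sepRMul_mk, piMap_tmul, piMap_tmul, sepRMul_mk]
      congr 2
      exact Subtype.ext (cycP_mul_right 𝒜 dA hA (φ w) hzmem hz1 _ _ c.2)

lemma pi_grading {n : ℤ} {ξ : SepTensor φ.toRingHom}
    (hξ : ξ ∈ sepGrading φ.toRingHom 𝒜 n) :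
    piMap 𝒜 𝒝 dA dB hA hB hAcomm φ hφ ψ hψ w hw hw1 hzmem hz1 hzz ξ ∈
      sepGrading ψ (cyclesGrading 𝒜 dA hA) n := by
  induction hξ using AddSubgroup.closure_induction with
  | mem x hx =>
      obtain ⟨i, j, b, b', hb, hb', hij, rfl⟩ := hx
      rw [piMap_tmul]
      exact sepGrading_tmul ψ (cyclesGrading 𝒜 dA hA)
        (cycP_mem_grading 𝒜 dA hA (φ w) hzmem hz1 hb)
        (cycP_mem_grading 𝒜 dA hA (φ w) hzmem hz1 hb') hij
  | zero => rw [map_zero]; exact zero_mem _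
  | add x y hx hy px py => rw [map_add]; exact add_mem px py
  | neg x hx px => rw [map_neg]; exact neg_mem px

lemma D_iota (ζ : SepTensor ψ) :
    DMap 𝒜 𝒝 dA dB hA φ hφ (iotaT 𝒜 𝒝 dA dB hA hB φ ψ hψ ζ) = 0 := by
  induction ζ using sep_induction with
  | zero => simp [-AlgHom.toRingHom_eq_coe]
  | add x y hx hy => rw [map_add, map_add, hx, hy, add_zero]
  | tmul c c' =>
      rw [iotaT_tmul, DMap_mk, sepDiffPre_tmul]
      have hc : dA (c : A) = 0 := c.2
      have hc' : dA (c' : A) = 0 := c'.2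
      rw [hc, hc', TensorProduct.zero_tmul, TensorProduct.tmul_zero, add_zero,
        map_zero]

include hzmem hz1 in
lemma D_lmulz (ξ : SepTensor φ.toRingHom) :
    DMap 𝒜 𝒝 dA dB hA φ hφ (sepLMul φ.toRingHom (φ w) ξ) =
      ξ - sepLMul φ.toRingHom (φ w) (DMap 𝒜 𝒝 dA dB hA φ hφ ξ) := by
  induction ξ using sep_induction with
  | zero => simp [-AlgHom.toRingHom_eq_coe]
  | add x y hx hy =>
      rw [map_add, map_add, hx, hy, map_add, map_add]
      abel
  | tmul b b' =>
      have e1 : signMap 𝒜 (φ w * b) = -(φ w * signMap 𝒜 b) := by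
        rw [my_signMap_mul, signMap_of_mem 𝒜 hzmem]
        push_cast
        simp
      have lhs : DMap 𝒜 𝒝 dA dB hA φ hφ
            (sepLMul φ.toRingHom (φ w) (sepMk φ.toRingHom (b ⊗ₜ[ℤ] b'))) =
          sepMk φ.toRingHom (b ⊗ₜ[ℤ] b') -
            sepMk φ.toRingHom ((φ w * dA b) ⊗ₜ[ℤ] b') -
            sepMk φ.toRingHom ((φ w * signMap 𝒜 b) ⊗ₜ[ℤ] dA b') := by
        rw [sepLMul_mk, DMap_mk, sepDiffPre_tmul, my_d_z_mul hA hzmem hz1, e1,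
          TensorProduct.sub_tmul, TensorProduct.neg_tmul, map_add, map_sub,
          map_neg]
        abel
      have rhs : sepMk φ.toRingHom (b ⊗ₜ[ℤ] b') -
            sepLMul φ.toRingHom (φ w)
              (DMap 𝒜 𝒝 dA dB hA φ hφ (sepMk φ.toRingHom (b ⊗ₜ[ℤ] b'))) =
          sepMk φ.toRingHom (b ⊗ₜ[ℤ] b') -
            sepMk φ.toRingHom ((φ w * dA b) ⊗ₜ[ℤ] b') -
            sepMk φ.toRingHom ((φ w * signMap 𝒜 b) ⊗ₜ[ℤ] dA b') := by
        rw [DMap_mk, sepDiffPre_tmul, map_add, map_add, sepLMul_mk, sepLMul_mk]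
        abel
      rw [lhs, rhs]

end AuxExt2
section Directions
set_option linter.unusedSectionVars false
set_option maxHeartbeats 1600000

variable {K A B : Type} [Field K] [Ring A] [Ring B] [Algebra K A] [Algebra K B]
  (𝒜 : ℤ → AddSubgroup A) [GradedRing 𝒜] (𝒝 : ℤ → AddSubgroup B) [GradedRing 𝒝]
  (dA : A →+ A) (dB : B →+ B)
  (hA : IsDGRing 𝒜 dA) (hB : IsDGRing 𝒝 dB)
  (hAcomm : IsGradedComm 𝒜)
  (φ : B →ₐ[K] A) (hφ : IsDGHom 𝒝 dB 𝒜 dA φ.toRingHom)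
  (ψ : cyclesSubring 𝒝 dB hB →+* cyclesSubring 𝒜 dA hA)
  (hψ : ∀ x : cyclesSubring 𝒝 dB hB, (ψ x : A) = φ (x : B))
  (w : B) (hw : w ∈ 𝒝 (-1)) (hw1 : dB w = 1)
  (hzmem : φ w ∈ 𝒜 (-1)) (hz1 : dA (φ w) = 1) (hzz : φ w * φ w = 0)

include hA hB hAcomm hφ hψ hw hw1 hzmem hz1 hzz in
lemma fwdDir : IsDGSeparable φ.toRingHom 𝒜 dA →
    IsGrSeparable ψ (cyclesGrading 𝒜 dA hA) := by
  rintro ⟨D, hD, ρ, ⟨hs1, hs2⟩, hgr, hcd⟩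
  refine ⟨AddMonoidHom.mk'
    (fun c => piMap 𝒜 𝒝 dA dB hA hB hAcomm φ hφ ψ hψ w hw hw1 hzmem hz1 hzz
      (ρ ((c : A))))
    (fun c c' => by
      show piMap 𝒜 𝒝 dA dB hA hB hAcomm φ hφ ψ hψ w hw hw1 hzmem hz1 hzz
          (ρ ((c : A) + (c' : A))) = _
      rw [map_add, map_add]), ⟨?_, ?_⟩, ?_⟩
  · intro c
    simp only [AddMonoidHom.mk'_apply]
    rw [sepMul_pi 𝒜 𝒝 dA dB hA hB hAcomm φ hφ ψ hψ w hw hw1 hzmem hz1 hzz,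
      hs1]
    exact cycP_of_cycle 𝒜 dA hA (φ w) hzmem hz1 c.2
  · intro c₁ c c₂
    simp only [AddMonoidHom.mk'_apply]
    have hco : ((c₁ * c * c₂ : cyclesSubring 𝒜 dA hA) : A) =
        (c₁ : A) * (c : A) * (c₂ : A) := rfl
    rw [hco, hs2, pi_lmul 𝒜 𝒝 dA dB hA hB hAcomm φ hφ ψ hψ w hw hw1 hzmem hz1 hzz,
      pi_rmul 𝒜 𝒝 dA dB hA hB hAcomm φ hφ ψ hψ w hw hw1 hzmem hz1 hzz]
  · intro n c hc
    simp only [AddMonoidHom.mk'_apply]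
    exact pi_grading 𝒜 𝒝 dA dB hA hB hAcomm φ hφ ψ hψ w hw hw1 hzmem hz1 hzz
      (hgr n _ hc)

include hA hB hAcomm hφ hψ hw hw1 hzmem hz1 hzz in
lemma bwdDir : IsGrSeparable ψ (cyclesGrading 𝒜 dA hA) →
    IsDGSeparable φ.toRingHom 𝒜 dA := by
  rintro ⟨ρ₀, ⟨h01, h02⟩, h0g⟩
  have h0L : ∀ (c : cyclesSubring 𝒜 dA hA) u, ρ₀ (c * u) = sepLMul ψ c (ρ₀ u) := by
    intro c u
    have h := h02 c u 1
    rwa [mul_one, sepRMul_one] at h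
  have h0R : ∀ u (c : cyclesSubring 𝒜 dA hA), ρ₀ (u * c) = sepRMul ψ c (ρ₀ u) := by
    intro u c
    have h := h02 1 u c
    rwa [one_mul, sepLMul_one] at h
  have hEr : ∀ c, EMap 𝒜 𝒝 dA dB hA hB φ hφ ψ hψ (ρ₀ c) = ρ₀ (sgnCyc 𝒜 dA hA c) := by
    intro c
    refine cycles_homog_induction 𝒜 dA hA
      { carrier := {c | EMap 𝒜 𝒝 dA dB hA hB φ hφ ψ hψ (ρ₀ c) =
          ρ₀ (sgnCyc 𝒜 dA hA c)}
        zero_mem' := by simp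
        add_mem' := by
          intro a b ha hb
          simp only [Set.mem_setOf_eq] at *
          rw [map_add, map_add, ha, hb, map_add, map_add]
        neg_mem' := by
          intro a ha
          simp only [Set.mem_setOf_eq] at *
          rw [map_neg, map_neg, ha, map_neg, map_neg] } ?_ c
    intro i x hx hc
    have hmem : (⟨x, hc⟩ : cyclesSubring 𝒜 dA hA) ∈ cyclesGrading 𝒜 dA hA i := hx
    have hsg : sgnCyc 𝒜 dA hA (⟨x, hc⟩ : cyclesSubring 𝒜 dA hA) =
        ((Int.negOnePow i : ℤ)) • (⟨x, hc⟩ : cyclesSubring 𝒜 dA hA) := by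
      refine Subtype.ext ?_
      rw [sgnCyc_coe, signMap_of_mem 𝒜 hx]
      norm_cast
    show EMap 𝒜 𝒝 dA dB hA hB φ hφ ψ hψ (ρ₀ ⟨x, hc⟩) = ρ₀ (sgnCyc 𝒜 dA hA ⟨x, hc⟩)
    rw [E_grading 𝒜 𝒝 dA dB hA hB φ hφ ψ hψ (h0g i _ hmem), hsg, map_zsmul]
  set F : A →+ SepTensor φ.toRingHom := AddMonoidHom.mk'
    (fun a =>
      iotaT 𝒜 𝒝 dA dB hA hB φ ψ hψ (ρ₀ (cycP 𝒜 dA hA (φ w) hzmem hz1 a)) +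
      sepLMul φ.toRingHom (φ w)
        (iotaT 𝒜 𝒝 dA dB hA hB φ ψ hψ (ρ₀ (dCyc 𝒜 dA hA a))))
    (fun a b => by simp only [map_add]; abel) with hFdef
  have hFa : ∀ a, F a =
      iotaT 𝒜 𝒝 dA dB hA hB φ ψ hψ (ρ₀ (cycP 𝒜 dA hA (φ w) hzmem hz1 a)) +
      sepLMul φ.toRingHom (φ w)
        (iotaT 𝒜 𝒝 dA dB hA hB φ ψ hψ (ρ₀ (dCyc 𝒜 dA hA a))) := fun _ => rfl
  have lzswap : ∀ (u : A) (ξ : SepTensor φ.toRingHom),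
      sepLMul φ.toRingHom (φ w) (sepLMul φ.toRingHom (signMap 𝒜 u) ξ) =
        sepLMul φ.toRingHom u (sepLMul φ.toRingHom (φ w) ξ) := by
    intro u ξ
    rw [← sepLMul_lmul, ← sepLMul_lmul, ← my_mul_z hAcomm hzmem u]
  have Lc : ∀ (c : cyclesSubring 𝒜 dA hA) (x : A),
      F ((c : A) * x) = sepLMul φ.toRingHom (c : A) (F x) := by
    intro c x
    have e1 : cycP 𝒜 dA hA (φ w) hzmem hz1 ((c : A) * x) =
        c * cycP 𝒜 dA hA (φ w) hzmem hz1 x :=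
      Subtype.ext (cycP_mul_left 𝒜 dA hA (φ w) hzmem hz1 hAcomm _ _ c.2)
    have e2 : dCyc 𝒜 dA hA ((c : A) * x) = sgnCyc 𝒜 dA hA c * dCyc 𝒜 dA hA x := by
      refine Subtype.ext ?_
      show dA ((c : A) * x) = signMap 𝒜 (c : A) * dA x
      have hc0 : dA (c : A) = 0 := c.2
      rw [hA.leibniz_total, hc0, zero_mul, zero_add]
    rw [hFa, hFa, e1, e2, h0L, h0L,
      iota_lmul 𝒜 𝒝 dA dB hA hB φ ψ hψ, iota_lmul 𝒜 𝒝 dA dB hA hB φ ψ hψ,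
      map_add]
    congr 1
    rw [sgnCyc_coe]
    exact lzswap (c : A) _
  have Lcy : ∀ (y x : A), dA y = 0 → F (y * x) = sepLMul φ.toRingHom y (F x) :=
    fun y x hy => Lc ⟨y, hy⟩ x
  have Lz : ∀ x, F (φ w * x) = sepLMul φ.toRingHom (φ w) (F x) := by
    intro x
    have e1 : cycP 𝒜 dA hA (φ w) hzmem hz1 (φ w * x) = 0 :=
      cycP_z_mul 𝒜 dA hA (φ w) hzmem hz1 hzz x
    have e2 : dCyc 𝒜 dA hA (φ w * x) = cycP 𝒜 dA hA (φ w) hzmem hz1 x := by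
      refine Subtype.ext ?_
      show dA (φ w * x) = x - φ w * dA x
      exact my_d_z_mul hA hzmem hz1 x
    rw [hFa, hFa, e1, e2, map_zero, map_zero, zero_add, map_add,
      ← sepLMul_lmul, hzz, sepLMul_zero', add_zero]
  have Rc : ∀ (c : cyclesSubring 𝒜 dA hA) (x : A),
      F (x * (c : A)) = sepRMul φ.toRingHom (c : A) (F x) := by
    intro c x
    have e1 : cycP 𝒜 dA hA (φ w) hzmem hz1 (x * (c : A)) =
        cycP 𝒜 dA hA (φ w) hzmem hz1 x * c :=
      Subtype.ext (cycP_mul_right 𝒜 dA hA (φ w) hzmem hz1 _ _ c.2)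
    have e2 : dCyc 𝒜 dA hA (x * (c : A)) = dCyc 𝒜 dA hA x * c := by
      refine Subtype.ext ?_
      show dA (x * (c : A)) = dA x * (c : A)
      have hc0 : dA (c : A) = 0 := c.2
      rw [hA.leibniz_total, hc0, mul_zero, add_zero]
    rw [hFa, hFa, e1, e2, h0R, h0R,
      iota_rmul 𝒜 𝒝 dA dB hA hB φ ψ hψ, iota_rmul 𝒜 𝒝 dA dB hA hB φ ψ hψ,
      map_add]
    congr 1
    exact sepLMul_rmul_comm φ.toRingHom (φ w) (c : A) _
  have Rcy : ∀ (y x : A), dA y = 0 → F (x * y) = sepRMul φ.toRingHom y (F x) :=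
    fun y x hy => Rc ⟨y, hy⟩ x
  have hFsign : ∀ x, F (signMap 𝒜 x) =
      iotaT 𝒜 𝒝 dA dB hA hB φ ψ hψ
        (EMap 𝒜 𝒝 dA dB hA hB φ hφ ψ hψ (ρ₀ (cycP 𝒜 dA hA (φ w) hzmem hz1 x))) -
      sepLMul φ.toRingHom (φ w)
        (iotaT 𝒜 𝒝 dA dB hA hB φ ψ hψ
          (EMap 𝒜 𝒝 dA dB hA hB φ hφ ψ hψ (ρ₀ (dCyc 𝒜 dA hA x)))) := by
    intro x
    have e1 : cycP 𝒜 dA hA (φ w) hzmem hz1 (signMap 𝒜 x) =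
        sgnCyc 𝒜 dA hA (cycP 𝒜 dA hA (φ w) hzmem hz1 x) :=
      Subtype.ext (cycP_sign 𝒜 dA hA (φ w) hzmem hz1 x)
    have e2 : dCyc 𝒜 dA hA (signMap 𝒜 x) = - sgnCyc 𝒜 dA hA (dCyc 𝒜 dA hA x) := by
      refine Subtype.ext ?_
      show dA (signMap 𝒜 x) = -(signMap 𝒜 (dA x))
      exact my_d_signMap hA x
    rw [hFa, e1, e2, ← hEr, map_neg, ← hEr, map_neg, map_neg]
    abel
  have Rz : ∀ x, F (x * φ w) = sepRMul φ.toRingHom (φ w) (F x) := by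
    intro x
    have lhs : F (x * φ w) = sepLMul φ.toRingHom (φ w)
        (iotaT 𝒜 𝒝 dA dB hA hB φ ψ hψ
          (EMap 𝒜 𝒝 dA dB hA hB φ hφ ψ hψ
            (ρ₀ (cycP 𝒜 dA hA (φ w) hzmem hz1 x)))) := by
      rw [my_mul_z hAcomm hzmem x, Lz, hFsign, map_sub, ← sepLMul_lmul, hzz,
        sepLMul_zero', sub_zero]
    have rhs : sepRMul φ.toRingHom (φ w) (F x) = sepLMul φ.toRingHom (φ w)
        (iotaT 𝒜 𝒝 dA dB hA hB φ ψ hψ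
          (EMap 𝒜 𝒝 dA dB hA hB φ hφ ψ hψ
            (ρ₀ (cycP 𝒜 dA hA (φ w) hzmem hz1 x)))) := by
      rw [hFa, map_add, rmulz_iota 𝒜 𝒝 dA dB hA hB hAcomm φ hφ ψ hψ w hzmem,
        ← sepLMul_rmul_comm,
        rmulz_iota 𝒜 𝒝 dA dB hA hB hAcomm φ hφ ψ hψ w hzmem,
        ← sepLMul_lmul, hzz, sepLMul_zero', add_zero]
    rw [lhs, rhs]
  have Lgen : ∀ a x, F (a * x) = sepLMul φ.toRingHom a (F x) := by
    intro a x
    have hdec : a * x = (cycP 𝒜 dA hA (φ w) hzmem hz1 a : A) * x +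
        φ w * (dA a * x) := by
      nth_rewrite 1 [cycP_decomp 𝒜 dA hA (φ w) hzmem hz1 a]
      rw [add_mul, mul_assoc]
    rw [hdec, map_add, Lcy _ x (cycP 𝒜 dA hA (φ w) hzmem hz1 a).2, Lz,
      Lcy _ x (hA.d_sq a), ← sepLMul_lmul, ← sepLMul_add',
      ← cycP_decomp 𝒜 dA hA (φ w) hzmem hz1 a]
  have Rgen : ∀ a x, F (x * a) = sepRMul φ.toRingHom a (F x) := by
    intro a x
    have hdec : x * a = x * (cycP 𝒜 dA hA (φ w) hzmem hz1 a : A) +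
        (x * φ w) * dA a := by
      nth_rewrite 1 [cycP_decomp 𝒜 dA hA (φ w) hzmem hz1 a]
      rw [mul_add, mul_assoc]
    rw [hdec, map_add, Rcy _ x (cycP 𝒜 dA hA (φ w) hzmem hz1 a).2,
      Rcy _ _ (hA.d_sq a), Rz, sepRMul_rmul, ← sepRMul_add',
      ← cycP_decomp 𝒜 dA hA (φ w) hzmem hz1 a]
  refine ⟨(DMap 𝒜 𝒝 dA dB hA φ hφ).toAddMonoidHom,
    fun x => DMap_mk 𝒜 𝒝 dA dB hA φ hφ x, F, ⟨?_, ?_⟩, ?_, ?_⟩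
  · intro a
    rw [hFa, map_add, sepMul_lmul, sepMul_iota 𝒜 𝒝 dA dB hA hB φ ψ hψ,
      sepMul_iota 𝒜 𝒝 dA dB hA hB φ ψ hψ, h01, h01]
    exact (cycP_decomp 𝒜 dA hA (φ w) hzmem hz1 a).symm
  · intro b₁ c b₂
    rw [Rgen, Lgen]
    exact (sepLMul_rmul_comm φ.toRingHom b₁ b₂ (F c)).symm
  · intro n a ha
    rw [hFa]
    refine add_mem ?_ ?_
    · exact iota_grading 𝒜 𝒝 dA dB hA hB φ ψ hψ
        (h0g n _ (cycP_mem_grading 𝒜 dA hA (φ w) hzmem hz1 ha))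
    · have h1 : dCyc 𝒜 dA hA a ∈ cyclesGrading 𝒜 dA hA (n + 1) := hA.d_mem n a ha
      have h2 := sepLMul_grading φ.toRingHom 𝒜 hzmem
        (iota_grading 𝒜 𝒝 dA dB hA hB φ ψ hψ (h0g (n + 1) _ h1))
      rwa [show (-1 : ℤ) + (n + 1) = n by ring] at h2
  · intro a
    have eP : cycP 𝒜 dA hA (φ w) hzmem hz1 (dA a) = dCyc 𝒜 dA hA a :=
      cycP_d 𝒜 dA hA (φ w) hzmem hz1 a
    have eD : dCyc 𝒜 dA hA (dA a) = 0 := Subtype.ext (hA.d_sq a)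
    show DMap 𝒜 𝒝 dA dB hA φ hφ (F a) = F (dA a)
    rw [hFa, hFa, eP, eD, map_zero, map_zero, map_zero, add_zero, map_add,
      D_iota 𝒜 𝒝 dA dB hA hB φ hφ ψ hψ,
      D_lmulz 𝒜 𝒝 dA dB hA φ hφ w hzmem hz1,
      D_iota 𝒜 𝒝 dA dB hA hB φ hφ ψ hψ, map_zero, sub_zero, zero_add]

end Directions
/-- Over a field of characteristic different from `2`, for a
dg-extension `φ : (B,d_B) → (A,d_A)` of graded commutative dg-division rings with
`(B,d_B)` acyclic: `(A,d_A)` is acyclic, and `φ` is dg-separable if and only if the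
induced graded extension `ker d_B → ker d_A` is graded-separable. -/
theorem acyclic_dgSeparable_iff_cycles_grSeparable
    {K A B : Type} [Field K] [Ring A] [Ring B] [Algebra K A] [Algebra K B]
    (hKchar : (2 : K) ≠ 0)
    (𝒜 : ℤ → AddSubgroup A) [GradedRing 𝒜] (𝒝 : ℤ → AddSubgroup B) [GradedRing 𝒝]
    (dA : A →+ A) (dB : B →+ B)
    (hA : IsDGRing 𝒜 dA) (hB : IsDGRing 𝒝 dB)
    (hAK : ∀ (k : K) (x : A), dA (k • x) = k • dA x)
    (hBK : ∀ (k : K) (x : B), dB (k • x) = k • dB x)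
    (hAcomm : IsGradedComm 𝒜) (hBcomm : IsGradedComm 𝒝)
    (hAdiv : IsDGDivisionRing 𝒜 dA) (hBdiv : IsDGDivisionRing 𝒝 dB)
    (hBacyclic : IsAcyclic dB)
    (φ : B →ₐ[K] A) (hφ : IsDGHom 𝒝 dB 𝒜 dA φ.toRingHom)
    (ψ : cyclesSubring 𝒝 dB hB →+* cyclesSubring 𝒜 dA hA)
    (hψ : ∀ x : cyclesSubring 𝒝 dB hB, (ψ x : A) = φ (x : B)) :
    IsAcyclic dA ∧
      (IsDGSeparable φ.toRingHom 𝒜 dA ↔ IsGrSeparable ψ (cyclesGrading 𝒜 dA hA)) := by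
  classical
  have d1B : dB (1 : B) = 0 := my_d_one hB
  obtain ⟨w₀, hw₀⟩ := hBacyclic 1 d1B
  set w : B := ((DirectSum.decompose 𝒝 w₀ (-1) : 𝒝 (-1)) : B) with hwdef
  have hw : w ∈ 𝒝 (-1) := SetLike.coe_mem _
  have hw1 : dB w = 1 := by
    rw [hwdef, my_d_decompose hB, hw₀,
      show (-1 : ℤ) + 1 = 0 by ring,
      DirectSum.decompose_of_mem_same 𝒝 (SetLike.one_mem_graded 𝒝)]
  have hzmem : φ w ∈ 𝒜 (-1) := hφ.map_mem (-1) w hw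
  have hz1 : dA (φ w) = 1 := by
    have h := hφ.map_d w
    rw [hw1, map_one] at h
    exact h.symm
  have hzz : φ w * φ w = 0 := my_zsq hKchar hAcomm hzmem
  refine ⟨?_, ?_, ?_⟩
  · intro x hx
    exact ⟨φ w * x, by rw [my_d_z_mul hA hzmem hz1 x, hx, mul_zero, sub_zero]⟩
  · exact fwdDir (𝒜 := 𝒜) (𝒝 := 𝒝) (dA := dA) (dB := dB) (hA := hA) (hB := hB)
      (hAcomm := hAcomm) (φ := φ) (hφ := hφ) (ψ := ψ) (hψ := hψ) (w := w)
      (hw := hw) (hw1 := hw1) (hzmem := hzmem) (hz1 := hz1) (hzz := hzz)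
  · exact bwdDir (𝒜 := 𝒜) (𝒝 := 𝒝) (dA := dA) (dB := dB) (hA := hA) (hB := hB)
      (hAcomm := hAcomm) (φ := φ) (hφ := hφ) (ψ := ψ) (hψ := hψ) (w := w)
      (hw := hw) (hw1 := hw1) (hzmem := hzmem) (hz1 := hz1) (hzz := hzz)
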